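/- arXiv:2502.06017 — 7 statements merged into one kernel-verified Lean document; each statement's English description precedes it below -/
import Mathlib

section
/- If S is a subgroup of the diagonal maximal torus T of SU(3) containing a non-singular element (i.e., an element whose three diagonal entries are pairwise distinct), then the normalizer of S in SU(3) is contained in the normalizer of T in SU(3). -/
open Matrix Complex

noncomputable section

noncomputable instance SUGroup {n : Type*} [Fintype n] [DecidableEq n] :
    Group ↥(Matrix.specialUnitaryGroup n ℂ) :=
  { (inferInstance : Monoid ↥(Matrix.specialUnitaryGroup n ℂ)) with
    inv := fun g => ⟨star g.val,
      Matrix.mem_specialUnitaryGroup_iff.mpr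
        ⟨Unitary.star_mem (Matrix.mem_specialUnitaryGroup_iff.mp g.prop).1, by
          rw [Matrix.star_eq_conjTranspose, Matrix.det_conjTranspose,
            (Matrix.mem_specialUnitaryGroup_iff.mp g.prop).2, star_one]⟩⟩
    inv_mul_cancel := fun g =>
      Subtype.ext (Matrix.mem_specialUnitaryGroup_iff.mp g.prop).1.1 }

abbrev SU3 := ↥(Matrix.specialUnitaryGroup (Fin 3) ℂ)

lemma SU3.coe_inv (g : SU3) :
    ((g⁻¹ : SU3) : Matrix (Fin 3) (Fin 3) ℂ) = star (g : Matrix (Fin 3) (Fin 3) ℂ) := rfl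

lemma isDiag_mul {A B : Matrix (Fin 3) (Fin 3) ℂ} (hA : A.IsDiag) (hB : B.IsDiag) :
    (A * B).IsDiag := by
  intro i j hij
  rw [Matrix.mul_apply]
  refine Finset.sum_eq_zero fun k _ => ?_
  rcases eq_or_ne i k with rfl | hik
  · rw [hB hij, mul_zero]
  · rw [hA hik, zero_mul]

/-- The diagonal maximal torus of `SU(3)`. -/
def diagTorus : Subgroup SU3 where
  carrier := {g | (g : Matrix (Fin 3) (Fin 3) ℂ).IsDiag}
  one_mem' := Matrix.isDiag_one
  mul_mem' := fun ha hb => isDiag_mul ha hb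
  inv_mem' := fun {g} hg => by
    show (star (g : Matrix (Fin 3) (Fin 3) ℂ)).IsDiag
    exact hg.conjTranspose

lemma mul_isDiag_apply {M B : Matrix (Fin 3) (Fin 3) ℂ} (hB : B.IsDiag) (i k : Fin 3) :
    (M * B) i k = M i k * B k k := by
  rw [Matrix.mul_apply]
  refine Finset.sum_eq_single k (fun l _ hl => ?_) (by simp)
  rw [hB hl, mul_zero]

lemma isDiag_mul_apply {M B : Matrix (Fin 3) (Fin 3) ℂ} (hB : B.IsDiag) (i k : Fin 3) :
    (B * M) i k = B i i * M i k := by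
  rw [Matrix.mul_apply]
  refine Finset.sum_eq_single i (fun l _ hl => ?_) (by simp)
  rw [hB hl.symm, zero_mul]

lemma key_lemma (m : SU3) (A D : Matrix (Fin 3) (Fin 3) ℂ)
    (hA : A.IsDiag) (hD : D.IsDiag)
    (hns : ∀ i j : Fin 3, i ≠ j → A i i ≠ A j j)
    (hMA : (m : Matrix (Fin 3) (Fin 3) ℂ) * A = D * (m : Matrix (Fin 3) (Fin 3) ℂ)) :
    ∀ B : Matrix (Fin 3) (Fin 3) ℂ, B.IsDiag →
      ((m : Matrix (Fin 3) (Fin 3) ℂ) * B * star (m : Matrix (Fin 3) (Fin 3) ℂ)).IsDiag := by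
  set M : Matrix (Fin 3) (Fin 3) ℂ := (m : Matrix (Fin 3) (Fin 3) ℂ) with hM
  have hunit : star M * M = 1 := (Matrix.mem_specialUnitaryGroup_iff.mp m.prop).1.1
  -- each column of M is nonzero
  have hcol : ∀ j : Fin 3, ∃ i, M i j ≠ 0 := by
    intro j
    by_contra hc
    push_neg at hc
    have h1 : (star M * M) j j = 0 := by
      rw [Matrix.mul_apply]
      refine Finset.sum_eq_zero fun k _ => ?_
      rw [hc k, mul_zero]
    rw [hunit] at h1
    simp at h1
  -- relation between entries of A and D
  have hAD : ∀ i j : Fin 3, M i j ≠ 0 → A j j = D i i := by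
    intro i j hij
    have h1 : (M * A) i j = (D * M) i j := by rw [hMA]
    rw [mul_isDiag_apply hA, isDiag_mul_apply hD, mul_comm (D i i)] at h1
    exact mul_left_cancel₀ hij h1
  classical
  set σ : Fin 3 → Fin 3 := fun j => (hcol j).choose with hσdef
  have hσ : ∀ j, M (σ j) j ≠ 0 := fun j => (hcol j).choose_spec
  have hσA : ∀ j, D (σ j) (σ j) = A j j := fun j => (hAD _ _ (hσ j)).symm
  have hσinj : Function.Injective σ := by
    intro a b hab
    by_contra hne
    exact hns a b hne (by rw [← hσA a, ← hσA b, hab])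
  have hσsurj : Function.Surjective σ := Finite.surjective_of_injective hσinj
  have hDdist : ∀ i j : Fin 3, i ≠ j → D i i ≠ D j j := by
    intro i j hij
    obtain ⟨a, rfl⟩ := hσsurj i
    obtain ⟨b, rfl⟩ := hσsurj j
    rw [hσA a, hσA b]
    exact hns a b (fun h => hij (by rw [h]))
  have hshape : ∀ i j : Fin 3, M i j ≠ 0 → i = σ j := by
    intro i j hij
    by_contra hne
    exact hDdist i (σ j) hne (by rw [hσA j, hAD i j hij])
  intro B hB i j hij
  rw [Matrix.mul_apply]
  refine Finset.sum_eq_zero fun k _ => ?_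
  rw [mul_isDiag_apply hB, Matrix.star_apply]
  rcases eq_or_ne i (σ k) with h1 | h1
  · have h2 : j ≠ σ k := fun h => hij (h1.trans h.symm)
    have h3 : M j k = 0 := by
      by_contra hc; exact h2 (hshape j k hc)
    rw [h3, star_zero, mul_zero]
  · have h3 : M i k = 0 := by
      by_contra hc; exact h1 (hshape i k hc)
    rw [h3, zero_mul, zero_mul]

/-- If `S ≤ T` (the diagonal maximal torus of `SU(3)`) contains a
non-singular element (pairwise distinct diagonal entries), then
`N_{SU(3)}(S) ≤ N_{SU(3)}(T)`. -/
theorem normalizer_le_of_contains_nonsingular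
    (S : Subgroup SU3) (hS : S ≤ diagTorus)
    (g : SU3) (hg : g ∈ S)
    (hns : ∀ i j : Fin 3, i ≠ j →
      (g : Matrix (Fin 3) (Fin 3) ℂ) i i ≠ (g : Matrix (Fin 3) (Fin 3) ℂ) j j) :
    Subgroup.normalizer (S : Set SU3) ≤ Subgroup.normalizer (diagTorus : Set SU3) := by
  intro n hn
  rw [Subgroup.mem_normalizer_iff] at hn ⊢
  have hA : ((g : Matrix (Fin 3) (Fin 3) ℂ)).IsDiag := hS hg
  -- n g n⁻¹ and n⁻¹ g n are in S, hence diagonal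
  have hg1 : n * g * n⁻¹ ∈ S := (hn g).mp hg
  have hg2 : n⁻¹ * g * n ∈ S := by
    refine (hn (n⁻¹ * g * n)).mpr ?_
    have h : n * (n⁻¹ * g * n) * n⁻¹ = g := by group
    rw [h]; exact hg
  have hD1 : (((n * g * n⁻¹ : SU3) : Matrix (Fin 3) (Fin 3) ℂ)).IsDiag := hS hg1
  have hD2 : (((n⁻¹ * g * n : SU3) : Matrix (Fin 3) (Fin 3) ℂ)).IsDiag := hS hg2
  have hMA1 : (n : Matrix (Fin 3) (Fin 3) ℂ) * (g : Matrix (Fin 3) (Fin 3) ℂ)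
      = ((n * g * n⁻¹ : SU3) : Matrix (Fin 3) (Fin 3) ℂ) * (n : Matrix (Fin 3) (Fin 3) ℂ) := by
    have h : n * g = (n * g * n⁻¹) * n := by group
    calc (n : Matrix (Fin 3) (Fin 3) ℂ) * (g : Matrix (Fin 3) (Fin 3) ℂ)
        = ((n * g : SU3) : Matrix (Fin 3) (Fin 3) ℂ) := rfl
      _ = (((n * g * n⁻¹) * n : SU3) : Matrix (Fin 3) (Fin 3) ℂ) := by rw [← h]
      _ = _ := rfl
  have hMA2 : ((n⁻¹ : SU3) : Matrix (Fin 3) (Fin 3) ℂ) * (g : Matrix (Fin 3) (Fin 3) ℂ)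
      = ((n⁻¹ * g * n : SU3) : Matrix (Fin 3) (Fin 3) ℂ)
        * ((n⁻¹ : SU3) : Matrix (Fin 3) (Fin 3) ℂ) := by
    have h : n⁻¹ * g = (n⁻¹ * g * n) * n⁻¹ := by group
    calc ((n⁻¹ : SU3) : Matrix (Fin 3) (Fin 3) ℂ) * (g : Matrix (Fin 3) (Fin 3) ℂ)
        = ((n⁻¹ * g : SU3) : Matrix (Fin 3) (Fin 3) ℂ) := rfl
      _ = (((n⁻¹ * g * n) * n⁻¹ : SU3) : Matrix (Fin 3) (Fin 3) ℂ) := by rw [← h]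
      _ = _ := rfl
  have key1 := key_lemma n _ _ hA hD1 hns hMA1
  have key2 := key_lemma n⁻¹ _ _ hA hD2 hns hMA2
  intro h
  constructor
  · intro hh
    show ((n * h * n⁻¹ : SU3) : Matrix (Fin 3) (Fin 3) ℂ).IsDiag
    have : ((n * h * n⁻¹ : SU3) : Matrix (Fin 3) (Fin 3) ℂ)
        = (n : Matrix (Fin 3) (Fin 3) ℂ) * (h : Matrix (Fin 3) (Fin 3) ℂ)
          * star (n : Matrix (Fin 3) (Fin 3) ℂ) := rfl
    rw [this]
    exact key1 _ hh
  · intro hh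
    have heq : h = n⁻¹ * (n * h * n⁻¹) * (n⁻¹)⁻¹ := by group
    show ((h : SU3) : Matrix (Fin 3) (Fin 3) ℂ).IsDiag
    rw [heq]
    have : ((n⁻¹ * (n * h * n⁻¹) * (n⁻¹)⁻¹ : SU3) : Matrix (Fin 3) (Fin 3) ℂ)
        = ((n⁻¹ : SU3) : Matrix (Fin 3) (Fin 3) ℂ)
          * ((n * h * n⁻¹ : SU3) : Matrix (Fin 3) (Fin 3) ℂ)
          * star ((n⁻¹ : SU3) : Matrix (Fin 3) (Fin 3) ℂ) := rfl
    rw [this]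
    exact key2 _ hh
end
end

section
/- The subgroup U(2) ⊂ SU(3), embedded as block matrices A ⊕ (det A)⁻¹ for A ∈ U(2), is self-normalizing in SU(3): its normalizer in SU(3) equals itself. -/
open Matrix Complex

noncomputable section

/-- The embedded `U(2)` in `SU(3)`: matrices vanishing at positions
`(1,3),(2,3),(3,1),(3,2)` (0-indexed: `(0,2),(1,2),(2,0),(2,1)`). -/
def embU2 : Subgroup SU3 where
  carrier := {g | (g : Matrix (Fin 3) (Fin 3) ℂ) 0 2 = 0 ∧
    (g : Matrix (Fin 3) (Fin 3) ℂ) 1 2 = 0 ∧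
    (g : Matrix (Fin 3) (Fin 3) ℂ) 2 0 = 0 ∧
    (g : Matrix (Fin 3) (Fin 3) ℂ) 2 1 = 0}
  one_mem' := by
    refine ⟨?_, ?_, ?_, ?_⟩ <;> simp [Matrix.one_apply]
  mul_mem' := by
    intro a b ha hb
    obtain ⟨ha1, ha2, ha3, ha4⟩ := ha
    obtain ⟨hb1, hb2, hb3, hb4⟩ := hb
    refine ⟨?_, ?_, ?_, ?_⟩ <;>
      · show ((a : Matrix (Fin 3) (Fin 3) ℂ) * (b : Matrix (Fin 3) (Fin 3) ℂ)) _ _ = 0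
        rw [Matrix.mul_apply, Fin.sum_univ_three]
        simp [ha1, ha2, ha3, ha4, hb1, hb2, hb3, hb4]
  inv_mem' := by
    intro g hg
    obtain ⟨h1, h2, h3, h4⟩ := hg
    refine ⟨?_, ?_, ?_, ?_⟩ <;>
      · show (star (g : Matrix (Fin 3) (Fin 3) ℂ)) _ _ = 0
        simp only [Matrix.star_eq_conjTranspose, Matrix.conjTranspose_apply]
        simp [h1, h2, h3, h4]


section AuxNormalizer

lemma entry_dconj (M : Matrix (Fin 3) (Fin 3) ℂ) (a b : Fin 3) :
    (M * !![I,0,0;0,I,0;0,0,-1] * star M) a b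
      = I * (M a 0 * star (M b 0)) + I * (M a 1 * star (M b 1)) - M a 2 * star (M b 2) := by
  simp [Matrix.mul_apply, Fin.sum_univ_three, Matrix.star_apply]
  ring

lemma entry_vconj (M : Matrix (Fin 3) (Fin 3) ℂ) (a b : Fin 3) :
    (M * !![I,0,0;0,-I,0;0,0,1] * star M) a b
      = I * (M a 0 * star (M b 0)) - I * (M a 1 * star (M b 1)) + M a 2 * star (M b 2) := by
  simp [Matrix.mul_apply, Fin.sum_univ_three, Matrix.star_apply]
  ring

lemma entry_uconj (M : Matrix (Fin 3) (Fin 3) ℂ) (a b : Fin 3) :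
    (M * (!![0,1,0;-1,0,0;0,0,1] : Matrix (Fin 3) (Fin 3) ℂ) * star M) a b
      = M a 0 * star (M b 1) - M a 1 * star (M b 0) + M a 2 * star (M b 2) := by
  simp [Matrix.mul_apply, Fin.sum_univ_three, Matrix.star_apply]
  ring

lemma key (x y z : ℂ) (e1 : x + y + z = 0) (e2 : I*x + I*y - z = 0)
    (e3 : I*x - I*y + z = 0) : x = 0 ∧ y = 0 ∧ z = 0 := by
  have hz : z = 0 := by
    have h : z * (1 + I) = 0 := by linear_combination I * e1 - e2
    rcases mul_eq_zero.mp h with h | h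
    · exact h
    · exact absurd (congrArg Complex.im h) (by simp)
  have hx : x = 0 := by
    have h1 : I * (x + y) = 0 := by linear_combination e2 + hz
    have h2 : I * (x - y) = 0 := by linear_combination e3 - hz
    have h3 : I * (2 * x) = 0 := by linear_combination h1 + h2
    rcases mul_eq_zero.mp h3 with h | h
    · exact absurd h I_ne_zero
    · linear_combination h / 2
  exact ⟨hx, by linear_combination e1 - hx - hz, hz⟩

def dElt : SU3 := ⟨!![I,0,0;0,I,0;0,0,-1], by
  rw [Matrix.mem_specialUnitaryGroup_iff]
  constructor
  · rw [Matrix.mem_unitaryGroup_iff]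
    ext i j
    fin_cases i <;> fin_cases j <;>
      simp [Matrix.mul_apply, Fin.sum_univ_three, Matrix.one_apply, Matrix.star_eq_conjTranspose]
  · simp [Matrix.det_fin_three]⟩

def vElt : SU3 := ⟨!![I,0,0;0,-I,0;0,0,1], by
  rw [Matrix.mem_specialUnitaryGroup_iff]
  constructor
  · rw [Matrix.mem_unitaryGroup_iff]
    ext i j
    fin_cases i <;> fin_cases j <;>
      simp [Matrix.mul_apply, Fin.sum_univ_three, Matrix.one_apply, Matrix.star_eq_conjTranspose]
  · simp [Matrix.det_fin_three]⟩

def uElt : SU3 := ⟨(!![0,1,0;-1,0,0;0,0,1] : Matrix (Fin 3) (Fin 3) ℂ), by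
  rw [Matrix.mem_specialUnitaryGroup_iff]
  constructor
  · rw [Matrix.mem_unitaryGroup_iff]
    ext i j
    fin_cases i <;> fin_cases j <;>
      simp [Matrix.mul_apply, Fin.sum_univ_three, Matrix.one_apply, Matrix.star_eq_conjTranspose]
  · simp [Matrix.det_fin_three]⟩

lemma dElt_mem : dElt ∈ embU2 := by
  refine ⟨?_, ?_, ?_, ?_⟩ <;> simp [dElt, Matrix.vecHead, Matrix.vecTail]

lemma vElt_mem : vElt ∈ embU2 := by
  refine ⟨?_, ?_, ?_, ?_⟩ <;> simp [vElt, Matrix.vecHead, Matrix.vecTail]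

lemma uElt_mem : uElt ∈ embU2 := by
  refine ⟨?_, ?_, ?_, ?_⟩ <;> simp [uElt, Matrix.vecHead, Matrix.vecTail]

end AuxNormalizer

/-- The embedded `U(2) ⊂ SU(3)` is self-normalizing. -/
theorem embU2_self_normalizing : Subgroup.normalizer (embU2 : Set SU3) = embU2 := by
  refine le_antisymm (fun g hg => ?_) Subgroup.le_normalizer
  rw [Subgroup.mem_normalizer_iff] at hg
  set M : Matrix (Fin 3) (Fin 3) ℂ := (g : Matrix (Fin 3) (Fin 3) ℂ) with hMdef
  have hgU := (Matrix.mem_specialUnitaryGroup_iff.mp g.prop).1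
  have hU : M * star M = 1 := Matrix.mem_unitaryGroup_iff.mp hgU
  have hU' : star M * M = 1 := Matrix.mem_unitaryGroup_iff'.mp hgU
  have row : ∀ a b, M a 0 * star (M b 0) + M a 1 * star (M b 1) + M a 2 * star (M b 2)
      = if a = b then 1 else 0 := by
    intro a b
    have h := congrFun (congrFun hU a) b
    simpa [Matrix.mul_apply, Fin.sum_univ_three, Matrix.star_apply, Matrix.one_apply] using h
  have col : ∀ a b, star (M 0 a) * M 0 b + star (M 1 a) * M 1 b + star (M 2 a) * M 2 b
      = if a = b then 1 else 0 := by
    intro a b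
    have h := congrFun (congrFun hU' a) b
    simpa [Matrix.mul_apply, Fin.sum_univ_three, Matrix.star_apply, Matrix.one_apply] using h
  -- extract the 4 entry conditions for each conjugated element
  obtain ⟨d1, d2, d3, d4⟩ := (hg dElt).mp dElt_mem
  obtain ⟨v1, v2, v3, v4⟩ := (hg vElt).mp vElt_mem
  obtain ⟨u1, u2, u3, u4⟩ := (hg uElt).mp uElt_mem
  -- the key consequences at the four off-block positions
  have K : ∀ a b : Fin 3, (M * (dElt : Matrix (Fin 3) (Fin 3) ℂ) * star M) a b = 0 →
      (M * (vElt : Matrix (Fin 3) (Fin 3) ℂ) * star M) a b = 0 → a ≠ b →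
      M a 0 * star (M b 0) = 0 ∧ M a 1 * star (M b 1) = 0 ∧ M a 2 * star (M b 2) = 0 := by
    intro a b hdm hvm hab
    rw [show (dElt : Matrix (Fin 3) (Fin 3) ℂ) = !![I,0,0;0,I,0;0,0,-1] from rfl,
      entry_dconj] at hdm
    rw [show (vElt : Matrix (Fin 3) (Fin 3) ℂ) = !![I,0,0;0,-I,0;0,0,1] from rfl,
      entry_vconj] at hvm
    have horth := row a b
    rw [if_neg hab] at horth
    exact key _ _ _ horth hdm hvm
  have K02 := K 0 2 d1 v1 (by decide)
  have K12 := K 1 2 d2 v2 (by decide)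
  have K20 := K 2 0 d3 v3 (by decide)
  have K21 := K 2 1 d4 v4 (by decide)
  have hu20 : M 2 0 * star (M 0 1) - M 2 1 * star (M 0 0) + M 2 2 * star (M 0 2) = 0 := by
    have h : (M * (uElt : Matrix (Fin 3) (Fin 3) ℂ) * star M) 2 0 = 0 := u3
    rwa [show (uElt : Matrix (Fin 3) (Fin 3) ℂ)
        = (!![0,1,0;-1,0,0;0,0,1] : Matrix (Fin 3) (Fin 3) ℂ) from rfl, entry_uconj] at h
  have hu21 : M 2 0 * star (M 1 1) - M 2 1 * star (M 1 0) + M 2 2 * star (M 1 2) = 0 := by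
    have h : (M * (uElt : Matrix (Fin 3) (Fin 3) ℂ) * star M) 2 1 = 0 := u4
    rwa [show (uElt : Matrix (Fin 3) (Fin 3) ℂ)
        = (!![0,1,0;-1,0,0;0,0,1] : Matrix (Fin 3) (Fin 3) ℂ) from rfl, entry_uconj] at h
  have star_eq_zero : ∀ w : ℂ, star w = 0 → w = 0 := fun w hw => by
    simpa using congrArg star hw
  have normsum : ∀ a : Fin 3, (Complex.normSq (M a 0) : ℂ) + Complex.normSq (M a 1)
      + Complex.normSq (M a 2) = 1 := by
    intro a
    have h := row a a
    rw [if_pos rfl] at h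
    simpa [Complex.star_def, Complex.mul_conj] using h
  by_cases h22 : M 2 2 = 0
  · exfalso
    by_cases h20 : M 2 0 = 0
    · by_cases h21 : M 2 1 = 0
      · have h := normsum 2
        rw [h20, h21, h22] at h
        simp at h
      · -- M 2 1 ≠ 0
        have h01 : M 0 1 = 0 := by
          rcases mul_eq_zero.mp K20.2.1 with h | h
          · exact absurd h h21
          · exact star_eq_zero _ h
        have h11 : M 1 1 = 0 := by
          rcases mul_eq_zero.mp K21.2.1 with h | h
          · exact absurd h h21
          · exact star_eq_zero _ h
        have h00 : M 0 0 = 0 := by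
          have h : M 2 1 * star (M 0 0) = 0 := by
            linear_combination -hu20 + (star (M 0 1)) * h20 + (star (M 0 2)) * h22
          rcases mul_eq_zero.mp h with h | h
          · exact absurd h h21
          · exact star_eq_zero _ h
        have h10 : M 1 0 = 0 := by
          have h : M 2 1 * star (M 1 0) = 0 := by
            linear_combination -hu21 + (star (M 1 1)) * h20 + (star (M 1 2)) * h22
          rcases mul_eq_zero.mp h with h | h
          · exact absurd h h21
          · exact star_eq_zero _ h
        -- row 0 gives |M 0 2| = 1, column 2 then forces M 1 2 = 0, row 1 is zero: contradiction
        have hn0 := normsum 0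
        rw [h00, h01] at hn0
        simp only [map_zero, Complex.ofReal_zero, zero_add] at hn0
        have hc := col 2 2
        rw [if_pos rfl, h22] at hc
        have hc' : (Complex.normSq (M 0 2) : ℂ) + Complex.normSq (M 1 2) = 1 := by
          have : star (M 0 2) * M 0 2 + star (M 1 2) * M 1 2 = 1 := by
            linear_combination hc
          calc (Complex.normSq (M 0 2) : ℂ) + Complex.normSq (M 1 2)
              = star (M 0 2) * M 0 2 + star (M 1 2) * M 1 2 := by
                simp [Complex.star_def, Complex.mul_conj, mul_comm]
            _ = 1 := this
        have h12 : (Complex.normSq (M 1 2) : ℂ) = 0 := by linear_combination hc' - hn0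
        have h12' : M 1 2 = 0 := by
          rw [← Complex.normSq_eq_zero]
          exact_mod_cast h12
        have hn1 := normsum 1
        rw [h10, h11, h12'] at hn1
        simp at hn1
    · -- M 2 0 ≠ 0
      have h00 : M 0 0 = 0 := by
        rcases mul_eq_zero.mp K20.1 with h | h
        · exact absurd h h20
        · exact star_eq_zero _ h
      have h10 : M 1 0 = 0 := by
        rcases mul_eq_zero.mp K21.1 with h | h
        · exact absurd h h20
        · exact star_eq_zero _ h
      have h01 : M 0 1 = 0 := by
        have hs00 : star (M 0 0) = (0 : ℂ) := by rw [h00, star_zero]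
        have h : M 2 0 * star (M 0 1) = 0 := by
          linear_combination hu20 + M 2 1 * hs00 - (star (M 0 2)) * h22
        rcases mul_eq_zero.mp h with h | h
        · exact absurd h h20
        · exact star_eq_zero _ h
      have h11 : M 1 1 = 0 := by
        have hs10 : star (M 1 0) = (0 : ℂ) := by rw [h10, star_zero]
        have h : M 2 0 * star (M 1 1) = 0 := by
          linear_combination hu21 + M 2 1 * hs10 - (star (M 1 2)) * h22
        rcases mul_eq_zero.mp h with h | h
        · exact absurd h h20
        · exact star_eq_zero _ h
      have hn0 := normsum 0
      rw [h00, h01] at hn0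
      simp only [map_zero, Complex.ofReal_zero, zero_add] at hn0
      have hc := col 2 2
      rw [if_pos rfl, h22] at hc
      have hc' : (Complex.normSq (M 0 2) : ℂ) + Complex.normSq (M 1 2) = 1 := by
        have h : star (M 0 2) * M 0 2 + star (M 1 2) * M 1 2 = 1 := by
          linear_combination hc
        calc (Complex.normSq (M 0 2) : ℂ) + Complex.normSq (M 1 2)
            = star (M 0 2) * M 0 2 + star (M 1 2) * M 1 2 := by
              simp [Complex.star_def, Complex.mul_conj, mul_comm]
          _ = 1 := h
      have h12 : (Complex.normSq (M 1 2) : ℂ) = 0 := by linear_combination hc' - hn0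
      have h12' : M 1 2 = 0 := by
        rw [← Complex.normSq_eq_zero]
        exact_mod_cast h12
      have hn1 := normsum 1
      rw [h10, h11, h12'] at hn1
      simp at hn1
  · -- main case : M 2 2 ≠ 0
    have h02 : M 0 2 = 0 := by
      rcases mul_eq_zero.mp K02.2.2 with h | h
      · exact h
      · exact absurd (star_eq_zero _ h) h22
    have h12 : M 1 2 = 0 := by
      rcases mul_eq_zero.mp K12.2.2 with h | h
      · exact h
      · exact absurd (star_eq_zero _ h) h22
    -- column 2 norm gives |M 2 2| = 1, then row 2 forces M 2 0 = M 2 1 = 0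
    have hc := col 2 2
    rw [if_pos rfl, h02, h12] at hc
    have hc' : (Complex.normSq (M 2 2) : ℂ) = 1 := by
      calc (Complex.normSq (M 2 2) : ℂ) = star (M 2 2) * M 2 2 := by
            simp [Complex.star_def, Complex.mul_conj, mul_comm]
        _ = 1 := by linear_combination hc
    have hn2 := normsum 2
    rw [show (Complex.normSq (M 2 2) : ℂ) = 1 from hc'] at hn2
    have hsum : Complex.normSq (M 2 0) + Complex.normSq (M 2 1) = 0 := by
      have : (Complex.normSq (M 2 0) : ℂ) + Complex.normSq (M 2 1) = 0 := by
        linear_combination hn2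
      exact_mod_cast this
    have h20 : M 2 0 = 0 := by
      rw [← Complex.normSq_eq_zero]
      nlinarith [Complex.normSq_nonneg (M 2 0), Complex.normSq_nonneg (M 2 1)]
    have h21 : M 2 1 = 0 := by
      rw [← Complex.normSq_eq_zero]
      nlinarith [Complex.normSq_nonneg (M 2 0), Complex.normSq_nonneg (M 2 1)]
    exact ⟨h02, h12, h20, h21⟩
end
end

section
/- Let S be a subgroup of the singular circle {diag(z,z,z⁻²)} in SU(3) which is not central in SU(3). Then the normalizer of S in SU(3) is contained in the embedded U(2) (block matrices A ⊕ (det A)⁻¹). -/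
open Matrix Complex

noncomputable section

/-- The circle subgroup `Z = {diag(z, z, z⁻²)}` of `SU(3)` (the centre of the
embedded `U(2)`). -/
def circleZ : Subgroup SU3 where
  carrier := {g | ∃ z : ℂ,
    (g : Matrix (Fin 3) (Fin 3) ℂ) = Matrix.diagonal ![z, z, (z * z)⁻¹]}
  one_mem' := ⟨1, by
    have : ![(1 : ℂ), 1, (1 * 1 : ℂ)⁻¹] = fun _ => (1 : ℂ) := by
      funext i; fin_cases i <;> norm_num
    rw [this]
    show (1 : Matrix (Fin 3) (Fin 3) ℂ) = _
    rw [← Matrix.diagonal_one]⟩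
  mul_mem' := by
    rintro a b ⟨z, hz⟩ ⟨w, hw⟩
    refine ⟨z * w, ?_⟩
    show (a : Matrix (Fin 3) (Fin 3) ℂ) * (b : Matrix (Fin 3) (Fin 3) ℂ) = _
    rw [hz, hw, Matrix.diagonal_mul_diagonal]
    apply congrArg Matrix.diagonal
    funext i
    fin_cases i
    · simp
    · simp
    · show ![z, z, (z * z)⁻¹] 2 * ![w, w, (w * w)⁻¹] 2 = (z * w * (z * w))⁻¹
      show (z * z)⁻¹ * (w * w)⁻¹ = (z * w * (z * w))⁻¹
      rw [← mul_inv]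
      congr 1
      ring
  inv_mem' := by
    rintro g ⟨z, hz⟩
    refine ⟨(starRingEnd ℂ) z, ?_⟩
    show star (g : Matrix (Fin 3) (Fin 3) ℂ) = _
    rw [hz, Matrix.star_eq_conjTranspose, Matrix.diagonal_conjTranspose]
    apply congrArg Matrix.diagonal
    funext i
    fin_cases i
    · simp [Complex.star_def]
    · simp [Complex.star_def]
    · show star (![z, z, (z * z)⁻¹] 2) = ((starRingEnd ℂ) z * (starRingEnd ℂ) z)⁻¹
      show star ((z * z)⁻¹) = ((starRingEnd ℂ) z * (starRingEnd ℂ) z)⁻¹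
      rw [star_inv₀, star_mul']
      rfl

/-- If `S` is a subgroup of the singular circle `{diag(z,z,z⁻²)}`
which is not central in `SU(3)`, then `N_{SU(3)}(S) ≤ U(2)` (embedded). -/
theorem normalizer_of_noncentral_subgroup_of_circleZ_le_embU2
    (S : Subgroup SU3) (hS : S ≤ circleZ) (hnc : ¬ S ≤ Subgroup.center SU3) :
    Subgroup.normalizer (S : Set SU3) ≤ embU2 := by
  intro g hg
  obtain ⟨s, hsS, hsc⟩ := SetLike.not_le_iff_exists.mp hnc
  obtain ⟨z, hz⟩ := hS hsS
  -- z is not a cube root of unity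
  have hzne : z ≠ (z * z)⁻¹ := by
    intro heq
    apply hsc
    refine Subgroup.mem_center_iff.mpr fun h => ?_
    apply Subtype.ext
    show (h : Matrix (Fin 3) (Fin 3) ℂ) * s = (s : Matrix (Fin 3) (Fin 3) ℂ) * h
    have hv : ![z, z, (z * z)⁻¹] = fun _ => z := by
      funext i; fin_cases i <;> simp [← heq]
    rw [hz, hv]
    ext i j
    simp [Matrix.mul_diagonal, Matrix.diagonal_mul, mul_comm]
  have hconj : g * s * g⁻¹ ∈ S := (Subgroup.mem_normalizer_iff.mp hg s).mp hsS
  obtain ⟨w, hw⟩ := hS hconj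
  have hgu : star (g : Matrix (Fin 3) (Fin 3) ℂ) * g = 1 :=
    (Matrix.mem_specialUnitaryGroup_iff.mp g.prop).1.1
  have hw' : (g : Matrix (Fin 3) (Fin 3) ℂ) * (s : Matrix (Fin 3) (Fin 3) ℂ) *
      star (g : Matrix (Fin 3) (Fin 3) ℂ) = Matrix.diagonal ![w, w, (w * w)⁻¹] := hw
  have key : (g : Matrix (Fin 3) (Fin 3) ℂ) * Matrix.diagonal ![z, z, (z * z)⁻¹]
      = Matrix.diagonal ![w, w, (w * w)⁻¹] * g := by
    have := congrArg (· * (g : Matrix (Fin 3) (Fin 3) ℂ)) hw'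
    simpa [hz, mul_assoc, hgu] using this
  have hE : ∀ i j, (g : Matrix (Fin 3) (Fin 3) ℂ) i j * (![z, z, (z * z)⁻¹] j)
      = (![w, w, (w * w)⁻¹] i) * (g : Matrix (Fin 3) (Fin 3) ℂ) i j := by
    intro i j
    have := congrFun (congrFun key i) j
    simpa [Matrix.mul_diagonal, Matrix.diagonal_mul] using this
  set G := (g : Matrix (Fin 3) (Fin 3) ℂ) with hG
  by_cases hwz : w = z
  · subst hwz
    have e02 : G 0 2 = 0 := by
      have h := hE 0 2
      simp only [Matrix.cons_val_zero, Matrix.cons_val_one, Matrix.head_cons,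
        Matrix.cons_val_two, Matrix.tail_cons] at h
      have : G 0 2 * ((w * w)⁻¹ - w) = 0 := by linear_combination h
      rcases mul_eq_zero.mp this with h' | h'
      · exact h'
      · exact absurd (sub_eq_zero.mp h').symm hzne
    have e12 : G 1 2 = 0 := by
      have h := hE 1 2
      simp only [Matrix.cons_val_zero, Matrix.cons_val_one, Matrix.head_cons,
        Matrix.cons_val_two, Matrix.tail_cons] at h
      have : G 1 2 * ((w * w)⁻¹ - w) = 0 := by linear_combination h
      rcases mul_eq_zero.mp this with h' | h'
      · exact h'
      · exact absurd (sub_eq_zero.mp h').symm hzne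
    have e20 : G 2 0 = 0 := by
      have h := hE 2 0
      simp only [Matrix.cons_val_zero, Matrix.cons_val_one, Matrix.head_cons,
        Matrix.cons_val_two, Matrix.tail_cons] at h
      have : G 2 0 * (w - (w * w)⁻¹) = 0 := by linear_combination h
      rcases mul_eq_zero.mp this with h' | h'
      · exact h'
      · exact absurd (sub_eq_zero.mp h') hzne
    have e21 : G 2 1 = 0 := by
      have h := hE 2 1
      simp only [Matrix.cons_val_zero, Matrix.cons_val_one, Matrix.head_cons,
        Matrix.cons_val_two, Matrix.tail_cons] at h
      have : G 2 1 * (w - (w * w)⁻¹) = 0 := by linear_combination h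
      rcases mul_eq_zero.mp this with h' | h'
      · exact h'
      · exact absurd (sub_eq_zero.mp h') hzne
    exact ⟨e02, e12, e20, e21⟩
  · exfalso
    have hzw : z - w ≠ 0 := sub_ne_zero.mpr fun h => hwz h.symm
    have e00 : G 0 0 = 0 := by
      have h := hE 0 0
      simp only [Matrix.cons_val_zero] at h
      have : G 0 0 * (z - w) = 0 := by linear_combination h
      exact (mul_eq_zero.mp this).resolve_right hzw
    have e01 : G 0 1 = 0 := by
      have h := hE 0 1
      simp only [Matrix.cons_val_zero, Matrix.cons_val_one, Matrix.head_cons] at h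
      have : G 0 1 * (z - w) = 0 := by linear_combination h
      exact (mul_eq_zero.mp this).resolve_right hzw
    have e10 : G 1 0 = 0 := by
      have h := hE 1 0
      simp only [Matrix.cons_val_zero, Matrix.cons_val_one, Matrix.head_cons] at h
      have : G 1 0 * (z - w) = 0 := by linear_combination h
      exact (mul_eq_zero.mp this).resolve_right hzw
    have e11 : G 1 1 = 0 := by
      have h := hE 1 1
      simp only [Matrix.cons_val_zero, Matrix.cons_val_one, Matrix.head_cons] at h
      have : G 1 1 * (z - w) = 0 := by linear_combination h
      exact (mul_eq_zero.mp this).resolve_right hzw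
    have hdet : G.det = 1 := (Matrix.mem_specialUnitaryGroup_iff.mp g.prop).2
    rw [Matrix.det_fin_three, e00, e01, e10, e11] at hdet
    simp at hdet
end
end

section
/- The normalizer of the circle subgroup Z = {diag(z,z,z⁻²) : |z|=1} in SU(3) equals the embedded copy of U(2) (block matrices A ⊕ (det A)⁻¹). -/
open Matrix Complex

noncomputable section

lemma SU3.coe_mul (a b : SU3) :
    ((a * b : SU3) : Matrix (Fin 3) (Fin 3) ℂ) =
      (a : Matrix (Fin 3) (Fin 3) ℂ) * (b : Matrix (Fin 3) (Fin 3) ℂ) := rfl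

lemma embU2_comm_circleZ {g h : SU3} (hg : g ∈ embU2) (hh : h ∈ circleZ) :
    g * h = h * g := by
  obtain ⟨h1, h2, h3, h4⟩ := hg
  obtain ⟨z, hz⟩ := hh
  refine Subtype.ext ?_
  rw [SU3.coe_mul, SU3.coe_mul, hz]
  ext i j
  rw [Matrix.mul_diagonal, Matrix.diagonal_mul]
  fin_cases i <;> fin_cases j <;> simp_all <;> ring

/-- The normalizer of the circle `Z = {diag(z,z,z⁻²)}` in `SU(3)`
equals the embedded `U(2)`. -/
theorem normalizer_circleZ_eq_embU2 : Subgroup.normalizer (circleZ : Set SU3) = embU2 := by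
  ext g
  rw [Subgroup.mem_normalizer_iff]
  constructor
  · intro hg
    have hDsu : Matrix.diagonal ![Complex.I, Complex.I, (Complex.I * Complex.I)⁻¹] ∈
        Matrix.specialUnitaryGroup (Fin 3) ℂ := by
      rw [Matrix.mem_specialUnitaryGroup_iff]
      constructor
      · rw [Matrix.mem_unitaryGroup_iff, Matrix.star_eq_conjTranspose,
          Matrix.diagonal_conjTranspose, Matrix.diagonal_mul_diagonal, ← Matrix.diagonal_one,
          Matrix.diagonal_eq_diagonal_iff]
        intro i
        fin_cases i <;> norm_num [Complex.I_mul_I, Complex.conj_I]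
      · rw [Matrix.det_diagonal, Fin.prod_univ_three]
        simp [Complex.I_mul_I]
    set D : SU3 := ⟨_, hDsu⟩ with hD
    have hDZ : D ∈ circleZ := ⟨Complex.I, rfl⟩
    obtain ⟨w, hw⟩ := (hg D).mp hDZ
    have key : (g : Matrix (Fin 3) (Fin 3) ℂ) *
        Matrix.diagonal ![Complex.I, Complex.I, (Complex.I * Complex.I)⁻¹]
        = Matrix.diagonal ![w, w, (w * w)⁻¹] * (g : Matrix (Fin 3) (Fin 3) ℂ) := by
      have h1 : (g * D * g⁻¹) * g = g * D := by group
      calc (g : Matrix (Fin 3) (Fin 3) ℂ) *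
            Matrix.diagonal ![Complex.I, Complex.I, (Complex.I * Complex.I)⁻¹]
          = ((g * D : SU3) : Matrix (Fin 3) (Fin 3) ℂ) := (SU3.coe_mul g D).symm
        _ = (((g * D * g⁻¹) * g : SU3) : Matrix (Fin 3) (Fin 3) ℂ) := by rw [h1]
        _ = ((g * D * g⁻¹ : SU3) : Matrix (Fin 3) (Fin 3) ℂ) *
              (g : Matrix (Fin 3) (Fin 3) ℂ) := SU3.coe_mul _ _
        _ = _ := by rw [hw]
    have hij : ∀ i j : Fin 3, (g : Matrix (Fin 3) (Fin 3) ℂ) i j *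
        (![Complex.I, Complex.I, (Complex.I * Complex.I)⁻¹] j)
        = (![w, w, (w * w)⁻¹] i) * (g : Matrix (Fin 3) (Fin 3) ℂ) i j := by
      intro i j
      have := congrFun (congrFun key i) j
      rwa [Matrix.mul_diagonal, Matrix.diagonal_mul] at this
    have hdet : (g : Matrix (Fin 3) (Fin 3) ℂ).det = 1 :=
      (Matrix.mem_specialUnitaryGroup_iff.mp g.prop).2
    have g00 := hij 0 0
    have g01 := hij 0 1
    have g10 := hij 1 0
    have g11 := hij 1 1
    have e02 := hij 0 2
    have e12 := hij 1 2
    have e20 := hij 2 0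
    have e21 := hij 2 1
    simp only [Matrix.cons_val_zero, Matrix.cons_val_one, Matrix.head_cons,
      Matrix.cons_val_two, Matrix.tail_cons, Complex.I_mul_I, inv_neg, inv_one] at g00 g01 g10 g11 e02 e12 e20 e21
    by_cases hwI : w = Complex.I
    · subst hwI
      simp only [Complex.I_mul_I, inv_neg, inv_one] at e20 e21
      have hI1 : (Complex.I + 1) ≠ 0 := by
        intro h
        have := congrArg Complex.im h
        simp at this
      refine ⟨?_, ?_, ?_, ?_⟩
      · have h1 : (Complex.I + 1) * (g : Matrix (Fin 3) (Fin 3) ℂ) 0 2 = 0 := by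
          linear_combination -e02
        exact (mul_eq_zero.mp h1).resolve_left hI1
      · have h1 : (Complex.I + 1) * (g : Matrix (Fin 3) (Fin 3) ℂ) 1 2 = 0 := by
          linear_combination -e12
        exact (mul_eq_zero.mp h1).resolve_left hI1
      · have h1 : (Complex.I + 1) * (g : Matrix (Fin 3) (Fin 3) ℂ) 2 0 = 0 := by
          linear_combination e20
        exact (mul_eq_zero.mp h1).resolve_left hI1
      · have h1 : (Complex.I + 1) * (g : Matrix (Fin 3) (Fin 3) ℂ) 2 1 = 0 := by
          linear_combination e21
        exact (mul_eq_zero.mp h1).resolve_left hI1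
    · exfalso
      have hIw : Complex.I - w ≠ 0 := sub_ne_zero_of_ne (Ne.symm hwI)
      have h00 : (g : Matrix (Fin 3) (Fin 3) ℂ) 0 0 = 0 := by
        have h1 : (Complex.I - w) * (g : Matrix (Fin 3) (Fin 3) ℂ) 0 0 = 0 := by
          linear_combination g00
        exact (mul_eq_zero.mp h1).resolve_left hIw
      have h01 : (g : Matrix (Fin 3) (Fin 3) ℂ) 0 1 = 0 := by
        have h1 : (Complex.I - w) * (g : Matrix (Fin 3) (Fin 3) ℂ) 0 1 = 0 := by
          linear_combination g01
        exact (mul_eq_zero.mp h1).resolve_left hIw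
      have h10 : (g : Matrix (Fin 3) (Fin 3) ℂ) 1 0 = 0 := by
        have h1 : (Complex.I - w) * (g : Matrix (Fin 3) (Fin 3) ℂ) 1 0 = 0 := by
          linear_combination g10
        exact (mul_eq_zero.mp h1).resolve_left hIw
      have h11 : (g : Matrix (Fin 3) (Fin 3) ℂ) 1 1 = 0 := by
        have h1 : (Complex.I - w) * (g : Matrix (Fin 3) (Fin 3) ℂ) 1 1 = 0 := by
          linear_combination g11
        exact (mul_eq_zero.mp h1).resolve_left hIw
      rw [Matrix.det_fin_three, h00, h01, h10, h11] at hdet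
      simp at hdet
  · intro hg h
    constructor
    · intro hh
      have : g * h * g⁻¹ = h := by
        rw [embU2_comm_circleZ hg hh, mul_assoc, mul_inv_cancel, mul_one]
      rwa [this]
    · intro hk
      have hginv : g⁻¹ ∈ embU2 := embU2.inv_mem hg
      have h1 : g⁻¹ * (g * h * g⁻¹) = (g * h * g⁻¹) * g⁻¹ := embU2_comm_circleZ hginv hk
      have h2 : h = g⁻¹ * (g * h * g⁻¹) * g := by group
      rw [h2, h1, mul_assoc, inv_mul_cancel, mul_one]
      exact hk
end
end

section
/- Suppose A is a subgroup of the circle Z = {diag(λ,λ,λ⁻²)} ⊂ SU(3), A is not contained in the centre of SU(3), and B is a subgroup of SU(3) conjugate to A, with B ⊆ Z as well. Then A = B. -/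
open Matrix Complex

noncomputable section

/-- If `A` is a non-central subgroup of the circle
`Z = {diag(λ,λ,λ⁻²)} ⊂ SU(3)` and `B ⊆ Z` is conjugate to `A` in `SU(3)`,
then `A = B`. -/
theorem conjugate_noncentral_subgroups_of_circleZ_are_equal
    (A B : Subgroup SU3) (hA : A ≤ circleZ) (hB : B ≤ circleZ)
    (hnc : ¬ A ≤ Subgroup.center SU3)
    (hconj : ∃ u : SU3, Subgroup.map (MulAut.conj u).toMonoidHom A = B) :
    A = B := by
  obtain ⟨u, hu⟩ := hconj
  rw [SetLike.le_def] at hnc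
  push_neg at hnc
  obtain ⟨a, haA, hac⟩ := hnc
  obtain ⟨z, hz⟩ := hA haA
  have hz3 : z ≠ (z * z)⁻¹ := by
    intro h
    apply hac
    rw [Subgroup.mem_center_iff]
    intro g
    apply Subtype.ext
    show g.val * a.val = a.val * g.val
    have hconst : (![z, z, (z * z)⁻¹] : Fin 3 → ℂ) = fun _ => z := by
      funext i; fin_cases i <;> simp [← h]
    rw [hz, hconst]
    ext i j
    rw [Matrix.mul_diagonal, Matrix.diagonal_mul]
    ring
  have haB : (MulAut.conj u) a ∈ B := hu ▸ ⟨a, haA, rfl⟩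
  obtain ⟨z', hz'⟩ := hB haB
  have hinvu : (u⁻¹ : SU3).val * u.val = 1 :=
    congrArg Subtype.val (inv_mul_cancel u)
  have hkey : u.val * Matrix.diagonal ![z, z, (z * z)⁻¹] =
      Matrix.diagonal ![z', z', (z' * z')⁻¹] * u.val := by
    have h1 : u.val * a.val * (u⁻¹ : SU3).val =
        Matrix.diagonal ![z', z', (z' * z')⁻¹] := hz'
    have h2 := congrArg (· * u.val) h1
    simp only [mul_assoc, hinvu, mul_one] at h2
    rw [← hz, h2]
  have key : ∀ i j, u.val i j * (![z, z, (z * z)⁻¹] : Fin 3 → ℂ) j =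
      (![z', z', (z' * z')⁻¹] : Fin 3 → ℂ) i * u.val i j := by
    intro i j
    have := congrFun (congrFun hkey i) j
    rwa [Matrix.mul_diagonal, Matrix.diagonal_mul] at this
  have hdet : (u.val).det = 1 := (Matrix.mem_specialUnitaryGroup_iff.mp u.prop).2
  have hzz : z' = z := by
    by_contra hne
    have hsub : z - z' ≠ 0 := sub_ne_zero.mpr (Ne.symm hne)
    have hzero : ∀ i j : Fin 3,
        u.val i j * z = z' * u.val i j → u.val i j = 0 := by
      intro i j h
      have : u.val i j * (z - z') = 0 := by linear_combination h
      exact (mul_eq_zero.mp this).resolve_right hsub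
    have h00 := hzero 0 0 (key 0 0)
    have h01 := hzero 0 1 (key 0 1)
    have h10 := hzero 1 0 (key 1 0)
    have h11 := hzero 1 1 (key 1 1)
    clear hzero
    rw [Matrix.det_fin_three, h00, h01, h10, h11] at hdet
    simp at hdet
  subst hzz
  have hww : (z' * z')⁻¹ - z' ≠ 0 := sub_ne_zero.mpr (Ne.symm hz3)
  have h02 : u.val 0 2 = 0 := by
    have k : u.val 0 2 * (z' * z')⁻¹ = z' * u.val 0 2 := key 0 2
    have : u.val 0 2 * ((z' * z')⁻¹ - z') = 0 := by linear_combination k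
    exact (mul_eq_zero.mp this).resolve_right hww
  have h12 : u.val 1 2 = 0 := by
    have k : u.val 1 2 * (z' * z')⁻¹ = z' * u.val 1 2 := key 1 2
    have : u.val 1 2 * ((z' * z')⁻¹ - z') = 0 := by linear_combination k
    exact (mul_eq_zero.mp this).resolve_right hww
  have h20 : u.val 2 0 = 0 := by
    have k : u.val 2 0 * z' = (z' * z')⁻¹ * u.val 2 0 := key 2 0
    have : u.val 2 0 * ((z' * z')⁻¹ - z') = 0 := by linear_combination -k
    exact (mul_eq_zero.mp this).resolve_right hww
  have h21 : u.val 2 1 = 0 := by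
    have k : u.val 2 1 * z' = (z' * z')⁻¹ * u.val 2 1 := key 2 1
    have : u.val 2 1 * ((z' * z')⁻¹ - z') = 0 := by linear_combination -k
    exact (mul_eq_zero.mp this).resolve_right hww
  have hcom : ∀ b : SU3, b ∈ circleZ → u * b = b * u := by
    intro b hb
    obtain ⟨l, hl⟩ := hb
    apply Subtype.ext
    show u.val * b.val = b.val * u.val
    rw [hl]
    ext i j
    rw [Matrix.mul_diagonal, Matrix.diagonal_mul]
    fin_cases i <;> fin_cases j <;>
      simp [h02, h12, h20, h21, mul_comm]
  have hfix : ∀ b : SU3, b ∈ A → (MulAut.conj u) b = b := by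
    intro b hb
    show u * b * u⁻¹ = b
    rw [hcom b (hA hb), mul_inv_cancel_right]
  rw [← hu]
  apply le_antisymm
  · intro x hx
    exact Subgroup.mem_map.mpr ⟨x, hx, hfix x hx⟩
  · intro x hx
    obtain ⟨b, hb, hbe⟩ := Subgroup.mem_map.mp hx
    have hfb : (MulAut.conj u).toMonoidHom b = b := hfix b hb
    rw [← hbe, hfb]
    exact hb
end
end

section
/- The normalizer of the diagonal maximal torus T in SU(3) is a split extension of T by the symmetric group Σ₃, where the splitting sends each transposition to the negative of the corresponding permutation matrix; in particular the Weyl group N_{SU(3)}(T)/T is isomorphic to Σ₃. -/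
open Matrix Complex

noncomputable section

namespace Scratch

/-- permutation matrix with entry 1 at (π j, j) -/
def permM (π : Equiv.Perm (Fin 3)) : Matrix (Fin 3) (Fin 3) ℂ :=
  Matrix.of fun i j => if i = π j then 1 else 0

lemma permM_apply (π : Equiv.Perm (Fin 3)) (i j : Fin 3) :
    permM π i j = if i = π j then 1 else 0 := rfl

lemma permM_one : permM 1 = 1 := by
  ext i j
  simp [permM_apply, Matrix.one_apply]
  congr

lemma permM_mul (π σ : Equiv.Perm (Fin 3)) : permM π * permM σ = permM (π * σ) := by
  ext i j
  rw [Matrix.mul_apply]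
  rw [Finset.sum_eq_single (σ j)]
  · simp [permM_apply]
    congr
  · intro k _ hk
    simp only [permM_apply]
    rw [if_neg hk, mul_zero]
  · simp

lemma star_permM (π : Equiv.Perm (Fin 3)) : star (permM π) = permM π⁻¹ := by
  ext i j
  simp only [Matrix.star_apply, permM_apply]
  rcases eq_or_ne i (π⁻¹ j) with h | h
  · rw [if_pos h, if_pos (by simp [h]), star_one]
  · rw [if_neg h, if_neg (fun hj => h (by simp [hj])), star_zero]

lemma permM_eq : ∀ π : Equiv.Perm (Fin 3), permM π = (Equiv.Perm.permMatrix ℂ π)ᵀ := by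
  intro π
  ext i j
  simp only [permM_apply, Equiv.Perm.permMatrix, Matrix.transpose_apply, PEquiv.toMatrix_apply,
    Equiv.toPEquiv_apply, Option.mem_def, Option.some_inj]
  rcases eq_or_ne i (π j) with h | h
  · rw [if_pos h, if_pos h.symm]
  · rw [if_neg h, if_neg (Ne.symm h)]

lemma det_permM (π : Equiv.Perm (Fin 3)) :
    (permM π).det = (((Equiv.Perm.sign π : ℤˣ) : ℤ) : ℂ) := by
  rw [permM_eq, Matrix.det_transpose, Matrix.det_permutation]


def sgn (π : Equiv.Perm (Fin 3)) : ℂ := (((Equiv.Perm.sign π : ℤˣ) : ℤ) : ℂ)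

lemma sgn_one : sgn 1 = 1 := by simp [sgn]

lemma sgn_mul (π σ : Equiv.Perm (Fin 3)) : sgn (π * σ) = sgn π * sgn σ := by
  simp [sgn, _root_.map_mul]

lemma sgn_sq (π : Equiv.Perm (Fin 3)) : sgn π * sgn π = 1 := by
  rcases Int.units_eq_one_or (Equiv.Perm.sign π) with h | h <;> simp [sgn, h]

lemma sgn_ne_zero (π : Equiv.Perm (Fin 3)) : sgn π ≠ 0 := by
  rcases Int.units_eq_one_or (Equiv.Perm.sign π) with h | h <;> simp [sgn, h]

lemma star_sgn (π : Equiv.Perm (Fin 3)) : star (sgn π) = sgn π := by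
  rcases Int.units_eq_one_or (Equiv.Perm.sign π) with h | h <;> simp [sgn, h]

def sM (π : Equiv.Perm (Fin 3)) : Matrix (Fin 3) (Fin 3) ℂ := sgn π • permM π

lemma star_sM (π : Equiv.Perm (Fin 3)) : star (sM π) = sM π⁻¹ := by
  rw [sM, sM, star_smul, star_sgn, star_permM]
  congr 1
  simp [sgn]

lemma sM_mul (π σ : Equiv.Perm (Fin 3)) : sM π * sM σ = sM (π * σ) := by
  rw [sM, sM, sM, smul_mul_assoc, mul_smul_comm, smul_smul, permM_mul, ← sgn_mul]

lemma sM_one : sM 1 = 1 := by rw [sM, sgn_one, permM_one, one_smul]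

lemma sM_mem (π : Equiv.Perm (Fin 3)) : sM π ∈ Matrix.specialUnitaryGroup (Fin 3) ℂ := by
  rw [Matrix.mem_specialUnitaryGroup_iff]
  constructor
  · rw [Matrix.mem_unitaryGroup_iff, star_sM, sM_mul, mul_inv_cancel, sM_one]
  · rw [sM, Matrix.det_smul, det_permM]
    show sgn π ^ (3 : ℕ) * sgn π = 1
    rw [pow_succ, mul_assoc, sgn_sq, mul_one, sq, sgn_sq]

def sHom : Equiv.Perm (Fin 3) →* SU3 where
  toFun π := ⟨sM π, sM_mem π⟩
  map_one' := Subtype.ext sM_one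
  map_mul' π σ := Subtype.ext (sM_mul π σ).symm

lemma sHom_coe (π : Equiv.Perm (Fin 3)) : ((sHom π : SU3) : Matrix (Fin 3) (Fin 3) ℂ) = sM π := rfl


lemma SU3.coe_mul (g h : SU3) :
    ((g * h : SU3) : Matrix (Fin 3) (Fin 3) ℂ) = (g : Matrix (Fin 3) (Fin 3) ℂ) * h := rfl

lemma mem_diagTorus {g : SU3} : g ∈ diagTorus ↔ (g : Matrix (Fin 3) (Fin 3) ℂ).IsDiag := Iff.rfl

lemma mul_permM_apply (A : Matrix (Fin 3) (Fin 3) ℂ) (τ : Equiv.Perm (Fin 3)) (i j : Fin 3) :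
    (A * permM τ) i j = A i (τ j) := by
  rw [Matrix.mul_apply, Finset.sum_eq_single (τ j)]
  · rw [permM_apply, if_pos rfl, mul_one]
  · intro k _ hk
    rw [permM_apply, if_neg hk, mul_zero]
  · simp

lemma permM_mul_apply (A : Matrix (Fin 3) (Fin 3) ℂ) (τ : Equiv.Perm (Fin 3)) (i j : Fin 3) :
    (permM τ * A) i j = A (τ⁻¹ i) j := by
  rw [Matrix.mul_apply, Finset.sum_eq_single (τ⁻¹ i)]
  · rw [permM_apply, if_pos (by simp), one_mul]
  · intro k _ hk
    rw [permM_apply, if_neg (fun h => hk (by simp [h])), zero_mul]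
  · simp

lemma sM_conj (π : Equiv.Perm (Fin 3)) (G : Matrix (Fin 3) (Fin 3) ℂ) :
    sM π * G * sM π⁻¹ = permM π * G * permM π⁻¹ := by
  rw [sM, sM, smul_mul_assoc, smul_mul_assoc, mul_smul_comm, smul_smul, ← sgn_mul,
    mul_inv_cancel, sgn_one, one_smul]

lemma conj_entry (π : Equiv.Perm (Fin 3)) (G : Matrix (Fin 3) (Fin 3) ℂ) (i j : Fin 3) :
    (sM π * G * sM π⁻¹) i j = G (π⁻¹ i) (π⁻¹ j) := by
  rw [sM_conj, mul_permM_apply, permM_mul_apply]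

lemma coe_conj (n g : SU3) :
    ((n * g * n⁻¹ : SU3) : Matrix (Fin 3) (Fin 3) ℂ)
      = (n : Matrix (Fin 3) (Fin 3) ℂ) * g * star (n : Matrix (Fin 3) (Fin 3) ℂ) := rfl

lemma sHom_mem_normalizer (π : Equiv.Perm (Fin 3)) : sHom π ∈ (Subgroup.normalizer (diagTorus : Set SU3)) := by
  rw [Subgroup.mem_normalizer_iff]
  intro g
  have hc : ∀ i j, ((sHom π * g * (sHom π)⁻¹ : SU3) : Matrix (Fin 3) (Fin 3) ℂ) i j
      = (g : Matrix (Fin 3) (Fin 3) ℂ) (π⁻¹ i) (π⁻¹ j) := by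
    intro i j
    have h1 : ((sHom π * g * (sHom π)⁻¹ : SU3) : Matrix (Fin 3) (Fin 3) ℂ)
        = sM π * (g : Matrix (Fin 3) (Fin 3) ℂ) * sM π⁻¹ := by
      rw [coe_conj, sHom_coe, ← star_sM]
    rw [h1, conj_entry]
  constructor
  · intro hg
    rw [mem_diagTorus] at hg ⊢
    intro i j hij
    rw [hc]
    exact hg fun h => hij (by simpa using congrArg π h)
  · intro hg
    rw [mem_diagTorus] at hg ⊢
    intro i j hij
    have h := hg (show π i ≠ π j from fun h => hij (π.injective h))
    simp only [hc] at h
    simpa using h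

/-- diag(1, I, -I), an element of SU(3) with distinct eigenvalues. -/
def torusElt : SU3 := ⟨Matrix.diagonal ![1, I, -I], by
  rw [Matrix.mem_specialUnitaryGroup_iff]
  constructor
  · rw [Matrix.mem_unitaryGroup_iff', Matrix.star_eq_conjTranspose,
      Matrix.diagonal_conjTranspose, Matrix.diagonal_mul_diagonal]
    ext i j
    rcases eq_or_ne i j with rfl | hij
    · rw [Matrix.diagonal_apply_eq, Matrix.one_apply_eq]
      fin_cases i <;>
        simp [Pi.star_apply, Complex.conj_I, neg_mul, mul_neg, Complex.I_mul_I]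
    · rw [Matrix.diagonal_apply_ne _ hij, Matrix.one_apply_ne hij]
  · rw [Matrix.det_diagonal, Fin.prod_univ_three]
    simp⟩

lemma vinj : ∀ j j' : Fin 3, (![1, I, -I] : Fin 3 → ℂ) j = ![1, I, -I] j' → j = j' := by
  intro j j' h
  fin_cases j <;> fin_cases j' <;> simp_all [Complex.ext_iff] <;> norm_num at h

lemma isDiag_mul_apply {A B : Matrix (Fin 3) (Fin 3) ℂ} (hA : A.IsDiag) (i j : Fin 3) :
    (A * B) i j = A i i * B i j := by
  rw [Matrix.mul_apply, Finset.sum_eq_single i]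
  · intro k _ hk
    rw [hA (Ne.symm hk), zero_mul]
  · simp

lemma exists_perm (n : SU3) (hn : n ∈ (Subgroup.normalizer (diagTorus : Set SU3))) :
    ∃ π : Equiv.Perm (Fin 3), ∀ i j, i ≠ π j → (n : Matrix (Fin 3) (Fin 3) ℂ) i j = 0 := by
  set N := (n : Matrix (Fin 3) (Fin 3) ℂ) with hN
  have ht0 : torusElt ∈ diagTorus := Matrix.isDiag_diagonal _
  have hconj : (n * torusElt * n⁻¹ : SU3) ∈ diagTorus :=
    (Subgroup.mem_normalizer_iff.mp hn torusElt).mp ht0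
  set T' := ((n * torusElt * n⁻¹ : SU3) : Matrix (Fin 3) (Fin 3) ℂ) with hT'def
  have hT' : T'.IsDiag := hconj
  have heq : T' * N = N * Matrix.diagonal ![1, I, -I] := by
    calc T' * N = ((n * torusElt * n⁻¹ * n : SU3) : Matrix (Fin 3) (Fin 3) ℂ) := rfl
    _ = ((n * torusElt : SU3) : Matrix (Fin 3) (Fin 3) ℂ) := by rw [inv_mul_cancel_right]
    _ = N * Matrix.diagonal ![1, I, -I] := rfl
  have hmain : ∀ i j, T' i i * N i j = N i j * ![1, I, -I] j := by
    intro i j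
    have := congrFun (congrFun heq i) j
    rwa [isDiag_mul_apply hT', Matrix.mul_diagonal] at this
  have hrow : ∀ i j j', N i j ≠ 0 → N i j' ≠ 0 → j = j' := by
    intro i j j' hj hj'
    refine vinj j j' ?_
    have h1 := hmain i j
    have h2 := hmain i j'
    rw [mul_comm (N i j)] at h1
    rw [mul_comm (N i j')] at h2
    have e1 := mul_right_cancel₀ hj h1
    have e2 := mul_right_cancel₀ hj' h2
    rw [← e1, ← e2]
  have hcol : ∀ j, ∃ i, N i j ≠ 0 := by
    intro j
    by_contra hc
    push_neg at hc
    have h0 : N.det = 0 := Matrix.det_eq_zero_of_column_eq_zero j hc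
    have h1 : N.det = 1 := (Matrix.mem_specialUnitaryGroup_iff.mp n.prop).2
    exact one_ne_zero (h1 ▸ h0)
  choose f hf using hcol
  have hinj : Function.Injective f := fun j j' h => hrow (f j) j j' (hf j) (h ▸ hf j')
  refine ⟨Equiv.ofBijective f ((Finite.injective_iff_bijective).mp hinj), ?_⟩
  intro i j hij
  by_contra hNij
  set π := Equiv.ofBijective f ((Finite.injective_iff_bijective).mp hinj) with hπ
  have hi : i = f (π.symm i) := (π.apply_symm_apply i).symm
  have h2 : N i (π.symm i) ≠ 0 := by
    have := hf (π.symm i)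
    rwa [← hi] at this
  have h3 : j = π.symm i := hrow i j (π.symm i) hNij h2
  exact hij (by rw [h3, π.apply_symm_apply])

lemma decomp_unique {d₁ d₂ : SU3} {π₁ π₂ : Equiv.Perm (Fin 3)}
    (h1 : d₁ ∈ diagTorus) (h2 : d₂ ∈ diagTorus)
    (h : d₁ * sHom π₁ = d₂ * sHom π₂) : π₁ = π₂ ∧ d₁ = d₂ := by
  have key : (d₂⁻¹ * d₁ : SU3) = sHom (π₂ * π₁⁻¹) := by
    rw [_root_.map_mul, _root_.map_inv]
    have := congrArg (fun x => d₂⁻¹ * x * (sHom π₁)⁻¹) h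
    simpa [mul_assoc] using this
  have hdiag : (sM (π₂ * π₁⁻¹)).IsDiag := by
    rw [← sHom_coe, ← key]
    exact mem_diagTorus.mp (diagTorus.mul_mem (diagTorus.inv_mem h2) h1)
  have hτ : π₂ * π₁⁻¹ = 1 := by
    set τ := π₂ * π₁⁻¹ with hτdef
    have hfix : ∀ j, τ j = j := by
      intro j
      by_contra hji
      have h0 := hdiag (show τ j ≠ j from hji)
      rw [sM, Matrix.smul_apply, permM_apply, if_pos rfl, smul_eq_mul, mul_one] at h0
      exact sgn_ne_zero τ h0
    exact Equiv.ext fun j => by simpa using hfix j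
  have hπ : π₁ = π₂ := (mul_inv_eq_one.mp hτ).symm
  refine ⟨hπ, ?_⟩
  rw [hπ] at h
  exact mul_right_cancel h

lemma decomp (n : SU3) (hn : n ∈ (Subgroup.normalizer (diagTorus : Set SU3))) :
    ∃! p : diagTorus × Equiv.Perm (Fin 3), n = (p.1 : SU3) * sHom p.2 := by
  obtain ⟨π, hπ⟩ := exists_perm n hn
  have hd : (n * (sHom π)⁻¹ : SU3) ∈ diagTorus := by
    rw [mem_diagTorus]
    have hval : ((n * (sHom π)⁻¹ : SU3) : Matrix (Fin 3) (Fin 3) ℂ)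
        = (n : Matrix (Fin 3) (Fin 3) ℂ) * sM π⁻¹ := by
      rw [SU3.coe_mul, SU3.coe_inv, sHom_coe, star_sM]
    rw [hval]
    intro i j hij
    rw [sM, mul_smul_comm, Matrix.smul_apply, mul_permM_apply, smul_eq_mul]
    rw [hπ i (π⁻¹ j) (fun h => hij (by simpa using h)), mul_zero]
  refine ⟨(⟨n * (sHom π)⁻¹, hd⟩, π), ?_, ?_⟩
  · show n = (n * (sHom π)⁻¹) * sHom π
    rw [inv_mul_cancel_right]
  · rintro ⟨d, σ⟩ hq
    have heq : (d : SU3) * sHom σ = (n * (sHom π)⁻¹) * sHom π := by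
      rw [inv_mul_cancel_right, ← hq]
    obtain ⟨hσ, hdd⟩ := decomp_unique d.2 hd heq
    exact Prod.ext (Subtype.ext hdd) hσ


/-- the diagonal part of an element of the normalizer -/
noncomputable def dOf (n : (Subgroup.normalizer (diagTorus : Set SU3))) : diagTorus :=
  (decomp (n : SU3) n.2).exists.choose.1

/-- the permutation part of an element of the normalizer -/
noncomputable def permOf (n : (Subgroup.normalizer (diagTorus : Set SU3))) : Equiv.Perm (Fin 3) :=
  (decomp (n : SU3) n.2).exists.choose.2

lemma dOf_spec (n : (Subgroup.normalizer (diagTorus : Set SU3))) :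
    (n : SU3) = (dOf n : SU3) * sHom (permOf n) :=
  (decomp (n : SU3) n.2).exists.choose_spec

lemma permOf_eq (n : (Subgroup.normalizer (diagTorus : Set SU3))) {d : SU3} (hd : d ∈ diagTorus)
    {π : Equiv.Perm (Fin 3)} (h : (n : SU3) = d * sHom π) : permOf n = π :=
  ((decomp_unique (dOf n).2 hd ((dOf_spec n).symm.trans h)).1)

noncomputable def permHom : (Subgroup.normalizer (diagTorus : Set SU3)) →* Equiv.Perm (Fin 3) where
  toFun := permOf
  map_one' := permOf_eq 1 diagTorus.one_mem (by simp [_root_.map_one])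
  map_mul' m n := by
    have hmem : sHom (permOf m) * (dOf n : SU3) * (sHom (permOf m))⁻¹ ∈ diagTorus :=
      (Subgroup.mem_normalizer_iff.mp (sHom_mem_normalizer (permOf m)) _).mp (dOf n).2
    refine permOf_eq (m * n)
      (diagTorus.mul_mem (dOf m).2 hmem) ?_
    show (m : SU3) * (n : SU3) = _
    rw [dOf_spec m, dOf_spec n, _root_.map_mul]
    group

lemma permHom_surjective : Function.Surjective permHom := by
  intro π
  refine ⟨⟨sHom π, sHom_mem_normalizer π⟩, ?_⟩
  exact permOf_eq _ diagTorus.one_mem (by rw [one_mul])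

lemma permHom_ker : diagTorus.subgroupOf (Subgroup.normalizer (diagTorus : Set SU3)) = permHom.ker := by
  ext n
  rw [Subgroup.mem_subgroupOf, MonoidHom.mem_ker]
  constructor
  · intro hn
    exact permOf_eq n hn (by rw [_root_.map_one, mul_one])
  · intro hn
    have := dOf_spec n
    rw [show permOf n = permHom n from rfl, hn, _root_.map_one, mul_one] at this
    rw [this]
    exact (dOf n).2

end Scratch

/-- The normalizer of the diagonal maximal torus `T` in `SU(3)` is a
split extension of `T` by `Σ₃`, the splitting sending a permutation `π` to
`sign(π)` times the permutation matrix (so each transposition goes to the negative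
of its permutation matrix); in particular the Weyl group `N(T)/T ≅ Σ₃`. -/
theorem normalizer_diagTorus_split_extension :
    ∃ s : Equiv.Perm (Fin 3) →* SU3,
      (∀ π : Equiv.Perm (Fin 3),
        ((s π : SU3) : Matrix (Fin 3) (Fin 3) ℂ) =
          (((Equiv.Perm.sign π : ℤˣ) : ℤ) : ℂ) •
            Matrix.of (fun i j : Fin 3 => if i = π j then (1 : ℂ) else 0)) ∧
      (∀ π : Equiv.Perm (Fin 3), s π ∈ (Subgroup.normalizer (diagTorus : Set SU3))) ∧
      (∀ n : SU3, n ∈ (Subgroup.normalizer (diagTorus : Set SU3)) →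
        ∃! p : diagTorus × Equiv.Perm (Fin 3), n = (p.1 : SU3) * s p.2) ∧
      Nonempty (((Subgroup.normalizer (diagTorus : Set SU3)) ⧸ diagTorus.subgroupOf (Subgroup.normalizer (diagTorus : Set SU3)))
        ≃* Equiv.Perm (Fin 3)) := by
  refine ⟨Scratch.sHom, fun π => rfl, Scratch.sHom_mem_normalizer, Scratch.decomp, ?_⟩
  exact ⟨(QuotientGroup.quotientMulEquivOfEq Scratch.permHom_ker).trans
    (QuotientGroup.quotientKerEquivOfSurjective _ Scratch.permHom_surjective)⟩
end
end

section
/- Let S be a subgroup of the diagonal maximal torus T² of SU(3) consisting of singular elements with z₁ = z₂, and suppose S contains an element with z₃ ≠ z₁. Then every element of SU(3) normalizing S lies in the embedded U(2) (block matrices A ⊕ (det A)⁻¹). -/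
open Matrix Complex

noncomputable section

lemma mul_isDiag_apply_s15 {A d : Matrix (Fin 3) (Fin 3) ℂ} (hd : d.IsDiag) (i j : Fin 3) :
    (A * d) i j = A i j * d j j := by
  rw [Matrix.mul_apply, Finset.sum_eq_single j]
  · intro k _ hk
    rw [hd hk, mul_zero]
  · intro h; exact absurd (Finset.mem_univ j) h

lemma isDiag_mul_apply_s15 {A d : Matrix (Fin 3) (Fin 3) ℂ} (hd : d.IsDiag) (i j : Fin 3) :
    (d * A) i j = d i i * A i j := by
  rw [Matrix.mul_apply, Finset.sum_eq_single i]
  · intro k _ hk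
    rw [hd (Ne.symm hk), zero_mul]
  · intro h; exact absurd (Finset.mem_univ i) h

/-- If `S` is a subgroup of the diagonal maximal torus of `SU(3)`
consisting of singular elements with `z₁ = z₂`, containing an element with
`z₃ ≠ z₁`, then every element of `SU(3)` normalizing `S` lies in the embedded `U(2)`. -/
theorem normalizer_le_embU2_of_singular_noncentral
    (S : Subgroup SU3) (hS : S ≤ diagTorus)
    (hsing : ∀ g ∈ S,
      (g : Matrix (Fin 3) (Fin 3) ℂ) 0 0 = (g : Matrix (Fin 3) (Fin 3) ℂ) 1 1)
    (hex : ∃ g ∈ S,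
      (g : Matrix (Fin 3) (Fin 3) ℂ) 2 2 ≠ (g : Matrix (Fin 3) (Fin 3) ℂ) 0 0) :
    Subgroup.normalizer (S : Set SU3) ≤ embU2 := by
  intro g hg
  obtain ⟨s, hsS, hne⟩ := hex
  have hts : (g * s * g⁻¹ : SU3) ∈ S := (Subgroup.mem_normalizer_iff.mp hg s).mp hsS
  set t : SU3 := g * s * g⁻¹ with ht
  have hsd : (s : Matrix (Fin 3) (Fin 3) ℂ).IsDiag := hS hsS
  have htd : (t : Matrix (Fin 3) (Fin 3) ℂ).IsDiag := hS hts
  have hunit : (star (g : Matrix (Fin 3) (Fin 3) ℂ)) * g = 1 :=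
    (Matrix.mem_specialUnitaryGroup_iff.mp g.prop).1.1
  have hgs : (g : Matrix (Fin 3) (Fin 3) ℂ) * s = (t : Matrix (Fin 3) (Fin 3) ℂ) * g := by
    have htval : (t : Matrix (Fin 3) (Fin 3) ℂ)
        = (g : Matrix (Fin 3) (Fin 3) ℂ) * s * star (g : Matrix (Fin 3) (Fin 3) ℂ) := rfl
    rw [htval, mul_assoc ((g : Matrix (Fin 3) (Fin 3) ℂ) * (s : Matrix (Fin 3) (Fin 3) ℂ)),
      hunit, mul_one]
  have key : ∀ i j : Fin 3, (g : Matrix (Fin 3) (Fin 3) ℂ) i j * (s : Matrix (Fin 3) (Fin 3) ℂ) j j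
      = (t : Matrix (Fin 3) (Fin 3) ℂ) i i * (g : Matrix (Fin 3) (Fin 3) ℂ) i j := by
    intro i j
    rw [← mul_isDiag_apply_s15 hsd, ← isDiag_mul_apply_s15 htd, hgs]
  have hs01 : (s : Matrix (Fin 3) (Fin 3) ℂ) 0 0 = (s : Matrix (Fin 3) (Fin 3) ℂ) 1 1 :=
    hsing s hsS
  have ht01 : (t : Matrix (Fin 3) (Fin 3) ℂ) 0 0 = (t : Matrix (Fin 3) (Fin 3) ℂ) 1 1 :=
    hsing t hts
  -- abbreviations
  set G := (g : Matrix (Fin 3) (Fin 3) ℂ) with hG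
  -- First show s 2 2 ≠ t 0 0
  have hwz : (s : Matrix (Fin 3) (Fin 3) ℂ) 2 2 ≠ (t : Matrix (Fin 3) (Fin 3) ℂ) 0 0 := by
    intro h
    have hznt : (s : Matrix (Fin 3) (Fin 3) ℂ) 0 0 ≠ (t : Matrix (Fin 3) (Fin 3) ℂ) 0 0 := by
      rw [← h]; exact fun hh => hne hh.symm
    have hG00 : G 0 0 = 0 := by
      have h2 : G 0 0 * ((s : Matrix (Fin 3) (Fin 3) ℂ) 0 0
          - (t : Matrix (Fin 3) (Fin 3) ℂ) 0 0) = 0 := by linear_combination key 0 0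
      rcases mul_eq_zero.mp h2 with h3 | h3
      · exact h3
      · exact absurd (sub_eq_zero.mp h3) hznt
    have hG01 : G 0 1 = 0 := by
      have h2 : G 0 1 * ((s : Matrix (Fin 3) (Fin 3) ℂ) 0 0
          - (t : Matrix (Fin 3) (Fin 3) ℂ) 0 0) = 0 := by
        have := key 0 1; rw [← hs01] at this; linear_combination this
      rcases mul_eq_zero.mp h2 with h3 | h3
      · exact h3
      · exact absurd (sub_eq_zero.mp h3) hznt
    have hG10 : G 1 0 = 0 := by
      have h2 : G 1 0 * ((s : Matrix (Fin 3) (Fin 3) ℂ) 0 0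
          - (t : Matrix (Fin 3) (Fin 3) ℂ) 0 0) = 0 := by
        have := key 1 0; rw [← ht01] at this; linear_combination this
      rcases mul_eq_zero.mp h2 with h3 | h3
      · exact h3
      · exact absurd (sub_eq_zero.mp h3) hznt
    have hG11 : G 1 1 = 0 := by
      have h2 : G 1 1 * ((s : Matrix (Fin 3) (Fin 3) ℂ) 0 0
          - (t : Matrix (Fin 3) (Fin 3) ℂ) 0 0) = 0 := by
        have := key 1 1; rw [← hs01, ← ht01] at this; linear_combination this
      rcases mul_eq_zero.mp h2 with h3 | h3
      · exact h3
      · exact absurd (sub_eq_zero.mp h3) hznt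
    have hdet : G.det = 1 := (Matrix.mem_specialUnitaryGroup_iff.mp g.prop).2
    rw [Matrix.det_fin_three, hG00, hG01, hG10, hG11] at hdet
    simp at hdet
  -- Now the third-column entries vanish
  have hG02 : G 0 2 = 0 := by
    have h2 : G 0 2 * ((s : Matrix (Fin 3) (Fin 3) ℂ) 2 2
        - (t : Matrix (Fin 3) (Fin 3) ℂ) 0 0) = 0 := by linear_combination key 0 2
    rcases mul_eq_zero.mp h2 with h3 | h3
    · exact h3
    · exact absurd (sub_eq_zero.mp h3) hwz
  have hG12 : G 1 2 = 0 := by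
    have h2 : G 1 2 * ((s : Matrix (Fin 3) (Fin 3) ℂ) 2 2
        - (t : Matrix (Fin 3) (Fin 3) ℂ) 0 0) = 0 := by
      have := key 1 2; rw [← ht01] at this; linear_combination this
    rcases mul_eq_zero.mp h2 with h3 | h3
    · exact h3
    · exact absurd (sub_eq_zero.mp h3) hwz
  -- Use unitarity to get the remaining entries
  have h22 : (starRingEnd ℂ) (G 2 2) * G 2 2 = 1 := by
    have e := congrFun (congrFun hunit 2) 2
    rw [Matrix.mul_apply, Fin.sum_univ_three] at e
    simp only [Matrix.star_eq_conjTranspose, Matrix.conjTranspose_apply, Matrix.one_apply_eq] at e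
    rw [hG02, hG12] at e
    simpa using e
  have hG22ne : (starRingEnd ℂ) (G 2 2) ≠ 0 := by
    intro h; rw [h, zero_mul] at h22; exact zero_ne_one h22
  have hG20 : G 2 0 = 0 := by
    have e := congrFun (congrFun hunit 2) 0
    rw [Matrix.mul_apply, Fin.sum_univ_three] at e
    simp only [Matrix.star_eq_conjTranspose, Matrix.conjTranspose_apply] at e
    rw [hG02, hG12] at e
    simp only [star_zero, zero_mul, zero_add] at e
    have : (2 : Fin 3) ≠ 0 := by decide
    rw [Matrix.one_apply_ne this] at e
    exact (mul_eq_zero.mp e).resolve_left hG22ne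
  have hG21 : G 2 1 = 0 := by
    have e := congrFun (congrFun hunit 2) 1
    rw [Matrix.mul_apply, Fin.sum_univ_three] at e
    simp only [Matrix.star_eq_conjTranspose, Matrix.conjTranspose_apply] at e
    rw [hG02, hG12] at e
    simp only [star_zero, zero_mul, zero_add] at e
    have : (2 : Fin 3) ≠ 1 := by decide
    rw [Matrix.one_apply_ne this] at e
    exact (mul_eq_zero.mp e).resolve_left hG22ne
  exact ⟨hG02, hG12, hG20, hG21⟩
end
end
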